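/- Let H be a complex Hilbert space, B_s(H) the set of all bounded self-adjoint operators on H, and φ : B_s(H) → B_s(H) a bijective map satisfying φ(ABA) = φ(A)φ(B)φ(A) for all A, B ∈ B_s(H). Then either φ(I) = I or φ(I) = −I. -/

import Mathlib

private lemma aux_eigen_const {H : Type*} [NormedAddCommGroup H] [InnerProductSpace ℂ H]
    (P : H →L[ℂ] H)
    (heig : ∀ y : H, y ≠ 0 → ∃ c : ℂ, (c = 1 ∨ c = -1) ∧ P y = c • y)
    (x₀ : H) (hx₀ : x₀ ≠ 0) (hPx₀ : P x₀ = x₀) : ∀ y : H, P y = y := by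
  have two_ne : (2 : ℂ) ≠ 0 := two_ne_zero
  have cancel : ∀ z : H, z = -z → z = 0 := by
    intro z hz
    have : (2 : ℂ) • z = 0 := by
      rw [two_smul]; nth_rewrite 2 [hz]; simp
    simpa [two_ne] using smul_eq_zero.mp this
  intro y
  rcases eq_or_ne y 0 with rfl | hy
  · simp
  obtain ⟨c, hc, hPy⟩ := heig y hy
  rcases hc with rfl | rfl
  · simpa using hPy
  · exfalso
    rcases eq_or_ne (x₀ + y) 0 with hz | hz
    · have hy' : y = -x₀ := eq_neg_of_add_eq_zero_right hz
      have h1 : P y = y := by rw [hy', map_neg, hPx₀]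
      have h2 : y = -y := by
        calc y = P y := h1.symm
        _ = -1 • y := hPy
        _ = -y := by rw [neg_smul, one_smul]
      exact hy (cancel y h2)
    · obtain ⟨d, hd, hPz⟩ := heig _ hz
      have hPz' : P (x₀ + y) = x₀ - y := by
        rw [map_add, hPx₀, hPy]; simp [sub_eq_add_neg]
      rcases hd with rfl | rfl
      · rw [hPz'] at hPz
        simp only [one_smul, sub_eq_add_neg] at hPz
        exact hy (cancel y (add_left_cancel hPz).symm)
      · rw [hPz'] at hPz
        rw [neg_smul, one_smul, neg_add, sub_eq_add_neg] at hPz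
        exact hx₀ (cancel x₀ (add_right_cancel hPz))

/-- A bijective Jordan triple multiplicative map of the set of bounded self-adjoint operators
on a complex Hilbert space sends the identity to `I` or to `-I`. -/
theorem jordan_triple_bijection_of_selfAdjoint_image_of_one
    {H : Type*} [NormedAddCommGroup H] [InnerProductSpace ℂ H] [CompleteSpace H]
    (φ : (H →L[ℂ] H) → (H →L[ℂ] H))
    (hbij : Set.BijOn φ {A : H →L[ℂ] H | IsSelfAdjoint A} {A : H →L[ℂ] H | IsSelfAdjoint A})
    (htriple : ∀ A : H →L[ℂ] H, IsSelfAdjoint A → ∀ B : H →L[ℂ] H, IsSelfAdjoint B →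
      φ (A * B * A) = φ A * φ B * φ A) :
    φ 1 = 1 ∨ φ 1 = -1 := by
  have h1 : IsSelfAdjoint (1 : H →L[ℂ] H) := IsSelfAdjoint.one _
  set P := φ 1 with hPdef
  have hfix : ∀ C : H →L[ℂ] H, IsSelfAdjoint C → P * C * P = C := by
    intro C hC
    obtain ⟨B, hB, rfl⟩ := hbij.surjOn hC
    have := htriple 1 h1 B hB
    simpa using this.symm
  have hP2 : P * P = 1 := by
    have := hfix 1 h1
    simpa using this
  have hcomm : ∀ C : H →L[ℂ] H, IsSelfAdjoint C → P * C = C * P := by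
    intro C hC
    conv_lhs => rw [← hfix C hC]
    rw [← mul_assoc, ← mul_assoc, hP2, one_mul]
  have heig : ∀ x : H, x ≠ 0 → ∃ c : ℂ, (c = 1 ∨ c = -1) ∧ P x = c • x := by
    intro x hx
    set T : H →L[ℂ] H := (innerSL ℂ x).smulRight x with hT
    have hTsa : IsSelfAdjoint T := by
      rw [ContinuousLinearMap.isSelfAdjoint_iff_isSymmetric]
      intro a b
      simp [hT, inner_smul_left, inner_smul_right, mul_comm]
    have hc := hcomm T hTsa
    have happ : P (T x) = T (P x) := by
      have := congrArg (fun f : H →L[ℂ] H => f x) hc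
      simpa using this
    have hxx : ((inner ℂ x x : ℂ)) ≠ 0 := by
      exact inner_self_ne_zero.mpr hx
    have heq : ((inner ℂ x x : ℂ)) • P x = ((inner ℂ x (P x) : ℂ)) • x := by
      simpa [hT, ContinuousLinearMap.smulRight_apply, map_smul] using happ
    set c : ℂ := (inner ℂ x (P x) : ℂ) / (inner ℂ x x : ℂ) with hcdef
    have hPx : P x = c • x := by
      rw [hcdef, div_eq_mul_inv, mul_comm, mul_smul]
      rw [← heq, ← smul_assoc, smul_eq_mul, inv_mul_cancel₀ hxx, one_smul]
    have hPPx : P (P x) = x := by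
      have := congrArg (fun f : H →L[ℂ] H => f x) hP2
      simpa using this
    have hc2 : c * c = 1 := by
      rw [hPx, map_smul, hPx, ← smul_assoc, smul_eq_mul] at hPPx
      by_contra hne
      have : (c * c - 1) • x = 0 := by
        rw [sub_smul, one_smul, hPPx, sub_self]
      rcases smul_eq_zero.mp this with h | h
      · exact hne (by linear_combination h)
      · exact hx h
    have : (c - 1) * (c + 1) = 0 := by ring_nf; linear_combination hc2
    rcases mul_eq_zero.mp this with h | h
    · exact ⟨c, Or.inl (by linear_combination h), hPx⟩
    · exact ⟨c, Or.inr (by linear_combination h), hPx⟩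
  rcases subsingleton_or_nontrivial H with hs | hn
  · left
    exact Subsingleton.elim _ _
  · obtain ⟨x₀, hx₀⟩ := exists_ne (0 : H)
    obtain ⟨c₀, hc₀, hPx₀⟩ := heig x₀ hx₀
    rcases hc₀ with rfl | rfl
    · left
      ext y
      have := aux_eigen_const P heig x₀ hx₀ (by simpa using hPx₀) y
      simpa using this
    · right
      have heig' : ∀ y : H, y ≠ 0 → ∃ c : ℂ, (c = 1 ∨ c = -1) ∧ (-P) y = c • y := by
        intro y hy
        obtain ⟨c, hc, hPy⟩ := heig y hy
        refine ⟨-c, ?_, by simp [hPy]⟩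
        rcases hc with rfl | rfl
        · exact Or.inr rfl
        · exact Or.inl (by norm_num)
      have := aux_eigen_const (-P) heig' x₀ hx₀ (by simp [hPx₀])
      ext y
      have hy := this y
      simp only [ContinuousLinearMap.neg_apply] at hy
      simp only [ContinuousLinearMap.neg_apply, ContinuousLinearMap.one_apply]
      exact neg_eq_iff_eq_neg.mp hy
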